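/- Let $G$ be a directed acyclic graph on vertices $\{1,\dots,K\}$ that is a rooted forest (each vertex has at most one parent), let $\Sigma_K$ be the set of permutations $\sigma$ of $\{1,\dots,K\}$ that are topological orders (i.e., every vertex appears after all vertices of the subtree rooted at it, equivalently for every edge from $i$ to $j$, vertex $j$ appears before $i$), and for each vertex $k$ let $V_k$ denote the vertex set of the subtree rooted at $k$. Then for positive reals $c_1,\dots,c_K$: $\sum_{\sigma \in \Sigma_K} \prod_{k=1}^{K} \left( \sum_{j=1}^{k} c_{\sigma(j)} \right)^{-1} = \prod_{k=1}^{K} \left( \sum_{j \in V_k} c_j \right)^{-1}$. -/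

import Mathlib

open Finset

open scoped Classical

namespace FPF

variable {K : ℕ}

/-- edge relation: `E par a b` means `b` is the parent of `a`. -/
def E (par : Fin K → Option (Fin K)) (a b : Fin K) : Prop := par a = some b

/-- subtree rooted at `k`. -/
noncomputable def V (par : Fin K → Option (Fin K)) (k : Fin K) : Finset (Fin K) :=
  Finset.univ.filter (fun j => Relation.ReflTransGen (E par) j k)

noncomputable def Sub (par : Fin K → Option (Fin K)) (c : Fin K → ℝ) (k : Fin K) : ℝ :=
  ∑ j ∈ V par k, c j

/-- roots of `s` : elements of `s` whose parent is not in `s`. -/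
noncomputable def roots (par : Fin K → Option (Fin K)) (s : Finset (Fin K)) :
    Finset (Fin K) := s.filter (fun r => ∀ b ∈ s, par r ≠ some b)

def Closed (par : Fin K → Option (Fin K)) (s : Finset (Fin K)) : Prop :=
  ∀ a b : Fin K, par a = some b → b ∈ s → a ∈ s

def Topo (par : Fin K → Option (Fin K)) (n : ℕ) (f : Fin n → Fin K) : Prop :=
  ∀ i j : Fin n, par (f i) = some (f j) → i < j

noncomputable def A (par : Fin K → Option (Fin K)) (n : ℕ) (s : Finset (Fin K)) :
    Finset (Fin n → Fin K) :=
  Finset.univ.filter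
    (fun f => Function.Injective f ∧ Finset.image f Finset.univ = s ∧ Topo par n f)

noncomputable def W (c : Fin K → ℝ) (n : ℕ) (f : Fin n → Fin K) : ℝ :=
  ∏ k : Fin n, (∑ j ∈ Finset.Iic k, c (f j))⁻¹

noncomputable def H (par : Fin K → Option (Fin K)) (c : Fin K → ℝ) (n : ℕ)
    (s : Finset (Fin K)) : ℝ := ∑ f ∈ A par n s, W c n f


def snoc' {n : ℕ} (g : Fin n → Fin K) (r : Fin K) : Fin (n + 1) → Fin K :=
  Fin.snoc g r

@[simp] lemma snoc'_castSucc {n : ℕ} (g : Fin n → Fin K) (r : Fin K) (i : Fin n) :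
    snoc' g r (Fin.castSucc i) = g i := by simp [snoc']

@[simp] lemma snoc'_last {n : ℕ} (g : Fin n → Fin K) (r : Fin K) :
    snoc' g r (Fin.last n) = r := by simp [snoc']

variable {par : Fin K → Option (Fin K)}

lemma mem_of_reach {s : Finset (Fin K)} (hs : Closed par s) {j k : Fin K}
    (hk : k ∈ s) (h : Relation.ReflTransGen (E par) j k) : j ∈ s := by
  induction h using Relation.ReflTransGen.head_induction_on with
  | refl => exact hk
  | head hab _ ih => exact hs _ _ hab ih

lemma closed_erase {s : Finset (Fin K)} (hs : Closed par s) {r : Fin K}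
    (hr : r ∈ roots par s) : Closed par (s.erase r) := by
  rcases Finset.mem_filter.mp hr with ⟨hrs, hroot⟩
  intro a b hab hb
  rcases Finset.mem_erase.mp hb with ⟨hbr, hbs⟩
  refine Finset.mem_erase.mpr ⟨?_, hs _ _ hab hbs⟩
  rintro rfl
  exact hroot b hbs hab

lemma notreach_root {s : Finset (Fin K)} (hs : Closed par s) {r k : Fin K}
    (hr : r ∈ roots par s) (hk : k ∈ s) (hne : r ≠ k)
    (h : Relation.ReflTransGen (E par) r k) : False := by
  rcases Finset.mem_filter.mp hr with ⟨hrs, hroot⟩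
  rcases Relation.reflTransGen_iff_eq_or_transGen.mp h with h' | h'
  · exact hne h'.symm
  · rcases Relation.TransGen.head'_iff.mp h' with ⟨p, hrp, hpk⟩
    exact hroot p (mem_of_reach hs hk hpk) hrp

lemma reach_total {r r' : Fin K} :
    ∀ {j : Fin K}, Relation.ReflTransGen (E par) j r →
      Relation.ReflTransGen (E par) j r' →
      Relation.ReflTransGen (E par) r r' ∨ Relation.ReflTransGen (E par) r' r := by
  intro j h1
  induction h1 using Relation.ReflTransGen.head_induction_on with
  | refl => intro h2; exact Or.inl h2
  | head hab hbr ih =>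
    intro h2
    rcases Relation.reflTransGen_iff_eq_or_transGen.mp h2 with h' | h'
    · subst h'
      exact Or.inr (Relation.ReflTransGen.head hab hbr)
    · rcases Relation.TransGen.head'_iff.mp h' with ⟨p, hap, hpr'⟩
      have hp : p = _ := Option.some.inj (hap.symm.trans hab)
      subst hp
      exact ih hpr'

lemma wf (hacyclic : ∀ k : Fin K, ¬ Relation.TransGen (E par) k k) :
    WellFounded (fun b a : Fin K => par a = some b) := by
  haveI : IsTrans (Fin K) (fun x y : Fin K => Relation.TransGen (E par) y x) :=
    ⟨fun _ _ _ h1 h2 => h2.trans h1⟩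
  haveI : IsIrrefl (Fin K) (fun x y : Fin K => Relation.TransGen (E par) y x) :=
    ⟨fun x h => hacyclic x h⟩
  have hwf := Finite.wellFounded_of_trans_of_irrefl
    (fun x y : Fin K => Relation.TransGen (E par) y x)
  exact Subrelation.wf
    (r := fun x y : Fin K => Relation.TransGen (E par) y x)
    (q := fun b a : Fin K => par a = some b)
    (fun {x y} h => Relation.TransGen.single h) hwf

lemma exists_root (hacyclic : ∀ k : Fin K, ¬ Relation.TransGen (E par) k k)
    {s : Finset (Fin K)} :
    ∀ j ∈ s, ∃ r ∈ roots par s, Relation.ReflTransGen (E par) j r := by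
  intro j
  refine (wf hacyclic).induction
    (C := fun j => j ∈ s → ∃ r ∈ roots par s, Relation.ReflTransGen (E par) j r) j ?_
  intro x ih hx
  by_cases hcase : ∃ b, par x = some b ∧ b ∈ s
  · rcases hcase with ⟨b, hb, hbs⟩
    rcases ih b hb hbs with ⟨r, hr, hrr⟩
    exact ⟨r, hr, Relation.ReflTransGen.head hb hrr⟩
  · refine ⟨x, Finset.mem_filter.mpr ⟨hx, ?_⟩, Relation.ReflTransGen.refl⟩
    intro b hbs hb
    exact hcase ⟨b, hb, hbs⟩

lemma self_mem_V (k : Fin K) : k ∈ V par k :=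
  Finset.mem_filter.mpr ⟨Finset.mem_univ _, Relation.ReflTransGen.refl⟩

lemma partition (hacyclic : ∀ k : Fin K, ¬ Relation.TransGen (E par) k k)
    {s : Finset (Fin K)} (hs : Closed par s) (c : Fin K → ℝ) :
    ∑ r ∈ roots par s, Sub par c r = ∑ j ∈ s, c j := by
  have hdisj : ∀ r ∈ roots par s, ∀ r' ∈ roots par s, r ≠ r' →
      Disjoint (V par r) (V par r') := by
    intro r hr r' hr' hne
    rw [Finset.disjoint_left]
    intro j hjr hjr'
    have h1 := (Finset.mem_filter.mp hjr).2
    have h2 := (Finset.mem_filter.mp hjr').2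
    have hrs := Finset.mem_of_mem_filter r hr
    have hrs' := Finset.mem_of_mem_filter r' hr'
    rcases reach_total h1 h2 with h | h
    · exact notreach_root hs hr hrs' hne h
    · exact notreach_root hs hr' hrs hne.symm h
  have hcover : s = (roots par s).biUnion (V par) := by
    ext j
    simp only [Finset.mem_biUnion]
    constructor
    · intro hj
      rcases exists_root hacyclic j hj with ⟨r, hr, hrr⟩
      exact ⟨r, hr, Finset.mem_filter.mpr ⟨Finset.mem_univ _, hrr⟩⟩
    · rintro ⟨r, hr, hjr⟩
      exact mem_of_reach hs (Finset.mem_of_mem_filter r hr)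
        (Finset.mem_filter.mp hjr).2
  calc ∑ r ∈ roots par s, Sub par c r
      = ∑ j ∈ (roots par s).biUnion (V par), c j :=
        (Finset.sum_biUnion hdisj).symm
    _ = ∑ j ∈ s, c j := by rw [← hcover]

lemma sum_Iic_castSucc {n : ℕ} (F : Fin (n + 1) → ℝ) (k : Fin n) :
    ∑ j ∈ Finset.Iic (Fin.castSucc k), F j = ∑ i ∈ Finset.Iic k, F (Fin.castSucc i) := by
  refine (Finset.sum_bij (fun i _ => Fin.castSucc i) ?_ ?_ ?_ ?_).symm
  · intro i hi
    exact Finset.mem_Iic.mpr (Fin.castSucc_le_castSucc_iff.mpr (Finset.mem_Iic.mp hi))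
  · intro i _ j _ h
    exact Fin.castSucc_injective n h
  · intro j hj
    have hj0 : j ≤ Fin.castSucc k := Finset.mem_Iic.mp hj
    have hj' : j.val ≤ k.val := hj0
    have hlt : j.val < n := lt_of_le_of_lt hj' k.isLt
    refine ⟨⟨j.val, hlt⟩, Finset.mem_Iic.mpr ?_, ?_⟩
    · exact hj'
    · ext; simp
  · intro i _; rfl

lemma image_snoc {n : ℕ} (g : Fin n → Fin K) (r : Fin K) :
    Finset.image (snoc' g r) Finset.univ = insert r (Finset.image g Finset.univ) := by
  ext x
  simp only [Finset.mem_image, Finset.mem_insert, Finset.mem_univ, true_and]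
  constructor
  · rintro ⟨i, rfl⟩
    induction i using Fin.lastCases with
    | last => left; rw [snoc'_last]
    | cast i => right; exact ⟨i, (snoc'_castSucc _ _ _).symm⟩
  · rintro (rfl | ⟨i, rfl⟩)
    · exact ⟨Fin.last n, snoc'_last _ _⟩
    · exact ⟨Fin.castSucc i, snoc'_castSucc _ _ _⟩

lemma snoc_injective {n : ℕ} {g : Fin n → Fin K} {r : Fin K}
    (hg : Function.Injective g) (hr : r ∉ Finset.image g Finset.univ) :
    Function.Injective (snoc' g r) := by
  intro i j h
  induction i using Fin.lastCases with
  | last =>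
    induction j using Fin.lastCases with
    | last => rfl
    | cast j =>
      rw [snoc'_last, snoc'_castSucc] at h
      exact absurd (Finset.mem_image.mpr ⟨j, Finset.mem_univ _, h.symm⟩) hr
  | cast i =>
    induction j using Fin.lastCases with
    | last =>
      rw [snoc'_last, snoc'_castSucc] at h
      exact absurd (Finset.mem_image.mpr ⟨i, Finset.mem_univ _, h⟩) hr
    | cast j =>
      rw [snoc'_castSucc, snoc'_castSucc] at h
      rw [hg h]

lemma W_snoc {n : ℕ} (c : Fin K → ℝ) (g : Fin n → Fin K) (r : Fin K) :
    W c (n + 1) (snoc' g r)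
      = W c n g * (∑ j : Fin (n + 1), c (snoc' g r j))⁻¹ := by
  rw [W, W, Fin.prod_univ_castSucc]
  congr 1
  · refine Finset.prod_congr rfl fun k _ => ?_
    rw [sum_Iic_castSucc]
    congr 1
    exact Finset.sum_congr rfl fun i _ => by rw [snoc'_castSucc]
  · congr 1
    have huniv : Finset.Iic (Fin.last n) = (Finset.univ : Finset (Fin (n + 1))) := by
      ext j; simp [Fin.le_last]
    rw [huniv]

lemma sum_snoc_eq {n : ℕ} (c : Fin K → ℝ) {g : Fin n → Fin K} {r : Fin K}
    {s : Finset (Fin K)} (hg : Function.Injective g)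
    (himg : Finset.image g Finset.univ = s.erase r) (hr : r ∈ s) :
    ∑ j : Fin (n + 1), c (snoc' g r j) = ∑ x ∈ s, c x := by
  have hinj : Function.Injective (snoc' g r) :=
    snoc_injective hg (by rw [himg]; exact Finset.notMem_erase r s)
  calc ∑ j : Fin (n + 1), c (snoc' g r j)
      = ∑ x ∈ Finset.image (snoc' g r) Finset.univ, c x :=
        (Finset.sum_image (fun a _ b _ h => hinj h)).symm
    _ = ∑ x ∈ insert r (s.erase r), c x := by rw [image_snoc, himg]
    _ = ∑ x ∈ s, c x := by rw [Finset.insert_erase hr]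

lemma H_succ (hacyclic : ∀ k : Fin K, ¬ Relation.TransGen (E par) k k)
    (c : Fin K → ℝ) {s : Finset (Fin K)} (hs : Closed par s) {n : ℕ} :
    H par c (n + 1) s
      = ∑ r ∈ roots par s, (∑ j ∈ s, c j)⁻¹ * H par c n (s.erase r) := by
  have key : ∑ p ∈ (roots par s).sigma (fun r => A par n (s.erase r)),
      (∑ j ∈ s, c j)⁻¹ * W c n p.2 = ∑ f ∈ A par (n + 1) s, W c (n + 1) f := by
    refine Finset.sum_bij'
      (fun (p : Σ _r : Fin K, Fin n → Fin K) (_ : p ∈ (roots par s).sigma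
        (fun r => A par n (s.erase r))) => snoc' p.2 p.1)
      (fun (f : Fin (n + 1) → Fin K) (_ : f ∈ A par (n + 1) s) =>
        (⟨f (Fin.last n), f ∘ Fin.castSucc⟩ : Σ _r : Fin K, Fin n → Fin K))
      ?_ ?_ ?_ ?_ ?_
    · -- to-membership
      rintro ⟨r, g⟩ hp
      rw [Finset.mem_sigma] at hp
      obtain ⟨hr, hg⟩ := hp
      rw [A, Finset.mem_filter] at hg
      obtain ⟨-, hginj, hgimg, hgtopo⟩ := hg
      have hrs : r ∈ s := Finset.mem_of_mem_filter r hr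
      have hroot : ∀ b ∈ s, par r ≠ some b := (Finset.mem_filter.mp hr).2
      have hrnot : r ∉ Finset.image g Finset.univ := by
        rw [hgimg]; exact Finset.notMem_erase r s
      refine Finset.mem_filter.mpr
        ⟨Finset.mem_univ _, snoc_injective hginj hrnot, ?_, ?_⟩
      · rw [image_snoc, hgimg, Finset.insert_erase hrs]
      · intro i j h
        dsimp only at h
        induction i using Fin.lastCases with
        | last =>
          exfalso
          rw [snoc'_last] at h
          induction j using Fin.lastCases with
          | last =>
            rw [snoc'_last] at h
            exact hacyclic r (Relation.TransGen.single h)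
          | cast j =>
            rw [snoc'_castSucc] at h
            have hgj : g j ∈ s.erase r := by
              rw [← hgimg]; exact Finset.mem_image_of_mem g (Finset.mem_univ _)
            exact hroot _ (Finset.mem_of_mem_erase hgj) h
        | cast i =>
          induction j using Fin.lastCases with
          | last => exact Fin.castSucc_lt_last i
          | cast j =>
            rw [snoc'_castSucc, snoc'_castSucc] at h
            exact Fin.castSucc_lt_castSucc_iff.mpr (hgtopo i j h)
    · -- from-membership
      intro f hf
      rw [A, Finset.mem_filter] at hf
      obtain ⟨-, hfinj, hfimg, hftopo⟩ := hf
      have hlast_mem : f (Fin.last n) ∈ s := by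
        rw [← hfimg]; exact Finset.mem_image_of_mem f (Finset.mem_univ _)
      have hroot : ∀ b ∈ s, par (f (Fin.last n)) ≠ some b := by
        intro b hbs hb
        rw [← hfimg] at hbs
        rcases Finset.mem_image.mp hbs with ⟨j, -, rfl⟩
        exact absurd (hftopo _ _ hb) (not_lt.mpr (Fin.le_last j))
      refine Finset.mem_sigma.mpr ⟨Finset.mem_filter.mpr ⟨hlast_mem, hroot⟩,
        Finset.mem_filter.mpr ⟨Finset.mem_univ _, ?_, ?_, ?_⟩⟩
      · exact hfinj.comp (Fin.castSucc_injective n)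
      · ext x
        simp only [Finset.mem_image, Finset.mem_univ, true_and,
          Function.comp_apply, Finset.mem_erase]
        constructor
        · rintro ⟨i, rfl⟩
          refine ⟨hfinj.ne (Fin.castSucc_lt_last i).ne, ?_⟩
          rw [← hfimg]; exact Finset.mem_image_of_mem f (Finset.mem_univ _)
        · rintro ⟨hne, hxs⟩
          rw [← hfimg] at hxs
          rcases Finset.mem_image.mp hxs with ⟨j, -, rfl⟩
          have hjne : j ≠ Fin.last n := by rintro rfl; exact hne rfl
          rcases Fin.exists_castSucc_eq.mpr hjne with ⟨i, rfl⟩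
          exact ⟨i, rfl⟩
      · intro i j h
        exact Fin.castSucc_lt_castSucc_iff.mp (hftopo _ _ h)
    · -- left inverse
      rintro ⟨r, g⟩ -
      dsimp only
      refine Sigma.ext (by simp) (heq_of_eq ?_)
      funext i
      simp
    · -- right inverse
      intro f _
      funext i
      show snoc' (f ∘ Fin.castSucc) (f (Fin.last n)) i = f i
      induction i using Fin.lastCases with
      | last => rw [snoc'_last]
      | cast i => rw [snoc'_castSucc]; rfl
    · -- values
      rintro ⟨r, g⟩ hp
      rw [Finset.mem_sigma] at hp
      obtain ⟨hr, hg⟩ := hp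
      rw [A, Finset.mem_filter] at hg
      obtain ⟨-, hginj, hgimg, -⟩ := hg
      have hrs : r ∈ s := Finset.mem_of_mem_filter r hr
      dsimp only at hginj hgimg ⊢
      rw [W_snoc, sum_snoc_eq c hginj hgimg hrs, mul_comm]
  rw [H, ← key, Finset.sum_sigma]
  refine Finset.sum_congr rfl fun r _ => ?_
  rw [H, Finset.mul_sum]

lemma main (hacyclic : ∀ k : Fin K, ¬ Relation.TransGen (E par) k k)
    (c : Fin K → ℝ) (hc : ∀ j, 0 < c j) :
    ∀ n (s : Finset (Fin K)), Closed par s → s.card = n →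
      H par c n s = ∏ k ∈ s, (Sub par c k)⁻¹ := by
  intro n
  induction n with
  | zero =>
    intro s _ hcard
    rw [Finset.card_eq_zero] at hcard
    subst hcard
    rw [Finset.prod_empty, H]
    have hA : A par 0 (∅ : Finset (Fin K)) = Finset.univ := by
      refine Finset.eq_univ_iff_forall.mpr fun f => Finset.mem_filter.mpr
        ⟨Finset.mem_univ _, fun i => i.elim0, ?_, fun i => i.elim0⟩
      rw [Finset.univ_eq_empty, Finset.image_empty]
    have hW : ∀ f : Fin 0 → Fin K, W c 0 f = 1 := by
      intro f; rw [W]; simp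
    rw [hA, Finset.sum_congr rfl fun f _ => hW f, Finset.sum_const, Finset.card_univ]
    simp
  | succ n ih =>
    intro s hclosed hcard
    have hne : s.Nonempty := Finset.card_pos.mp (hcard ▸ Nat.succ_pos n)
    have hC : 0 < ∑ j ∈ s, c j := Finset.sum_pos (fun j _ => hc j) hne
    have hSubpos : ∀ k : Fin K, 0 < Sub par c k := fun k =>
      Finset.sum_pos (fun j _ => hc j) ⟨k, self_mem_V k⟩
    rw [H_succ hacyclic c hclosed]
    have hstep : ∀ r ∈ roots par s,
        (∑ j ∈ s, c j)⁻¹ * H par c n (s.erase r)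
          = ((∑ j ∈ s, c j)⁻¹ * ∏ k ∈ s, (Sub par c k)⁻¹) * Sub par c r := by
      intro r hr
      have hrs : r ∈ s := Finset.mem_of_mem_filter r hr
      have hcard' : (s.erase r).card = n := by
        rw [Finset.card_erase_of_mem hrs, hcard]
        omega
      rw [ih (s.erase r) (closed_erase hclosed hr) hcard']
      have hprod : ∏ k ∈ s.erase r, (Sub par c k)⁻¹
          = (∏ k ∈ s, (Sub par c k)⁻¹) * Sub par c r := by
        have h1 : (∏ k ∈ s.erase r, (Sub par c k)⁻¹) * (Sub par c r)⁻¹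
            = ∏ k ∈ s, (Sub par c k)⁻¹ := Finset.prod_erase_mul s _ hrs
        rw [← h1, mul_assoc, inv_mul_cancel₀ (ne_of_gt (hSubpos r)), mul_one]
      rw [hprod, ← mul_assoc]
    rw [Finset.sum_congr rfl hstep, ← Finset.mul_sum, partition hacyclic hclosed c,
      mul_comm _ (∑ j ∈ s, c j), ← mul_assoc,
      mul_inv_cancel₀ (ne_of_gt hC), one_mul]

end FPF

open scoped Classical in
theorem forest_partial_fraction_identity (K : ℕ) (par : Fin K → Option (Fin K))
    (hacyclic : ∀ k : Fin K, ¬ Relation.TransGen (fun a b => par a = some b) k k)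
    (c : Fin K → ℝ) (hc : ∀ j, 0 < c j) :
    ∑ σ ∈ Finset.univ.filter
        (fun σ : Equiv.Perm (Fin K) =>
          ∀ a b : Fin K, par a = some b → σ.symm a < σ.symm b),
      ∏ k : Fin K, (∑ j ∈ Finset.Iic k, c (σ j))⁻¹
      = ∏ k : Fin K,
          (∑ j ∈ Finset.univ.filter
              (fun j : Fin K => Relation.ReflTransGen (fun a b => par a = some b) j k),
            c j)⁻¹ := by
  have hacyclic' : ∀ k : Fin K, ¬ Relation.TransGen (FPF.E par) k k := hacyclic
  have hmain := FPF.main hacyclic' c hc K Finset.univ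
    (fun a b _ _ => Finset.mem_univ a) (Finset.card_fin K)
  have hsum : ∑ σ ∈ Finset.univ.filter
        (fun σ : Equiv.Perm (Fin K) =>
          ∀ a b : Fin K, par a = some b → σ.symm a < σ.symm b),
      ∏ k : Fin K, (∑ j ∈ Finset.Iic k, c (σ j))⁻¹
      = FPF.H par c K Finset.univ := by
    rw [FPF.H]
    refine Finset.sum_bij (fun σ _ => ⇑σ) ?_ ?_ ?_ ?_
    · intro σ hσ
      rw [Finset.mem_filter] at hσ
      refine Finset.mem_filter.mpr ⟨Finset.mem_univ _, σ.injective, ?_, ?_⟩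
      · refine Finset.eq_univ_iff_forall.mpr fun x => Finset.mem_image.mpr
          ⟨σ.symm x, Finset.mem_univ _, σ.apply_symm_apply x⟩
      · intro i j h
        have := hσ.2 (σ i) (σ j) h
        simpa using this
    · intro σ₁ _ σ₂ _ h
      exact Equiv.coe_fn_injective h
    · intro f hf
      rw [FPF.A, Finset.mem_filter] at hf
      obtain ⟨-, hfinj, -, hftopo⟩ := hf
      have hbij : Function.Bijective f := Finite.injective_iff_bijective.mp hfinj
      refine ⟨Equiv.ofBijective f hbij,
        Finset.mem_filter.mpr ⟨Finset.mem_univ _, ?_⟩, rfl⟩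
      intro a b hab
      apply hftopo
      have ha : f ((Equiv.ofBijective f hbij).symm a) = a :=
        (Equiv.ofBijective f hbij).apply_symm_apply a
      have hb : f ((Equiv.ofBijective f hbij).symm b) = b :=
        (Equiv.ofBijective f hbij).apply_symm_apply b
      rw [ha, hb]
      exact hab
    · intro σ _; rfl
  rw [hsum, hmain]
  rfl
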